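/- For all d ≥ 2 and n ≥ 2, the tensor rank of the n-qudit N state equals (n−1)(d−1)+1: rk(N(d,n)) = (n−1)(d−1)+1. -/

import Mathlib

namespace QIT

noncomputable section

/-- The coordinate description of the rank-one (simple) tensor
`v 1 ⊗ ⋯ ⊗ v n` with local factors `v i : ℂ^{α i}`.  Throughout, a tensor in
`ℂ^{α 1} ⊗ ⋯ ⊗ ℂ^{α n}` (each local space `ℂ^{α i}` being the space `α i → ℂ`
with its standard basis) is identified with its coefficient array, a function
`(∀ i, α i) → ℂ` on multi-indices. -/
def prodTensor {ι : Type} [Fintype ι] {α : ι → Type} (v : ∀ i, α i → ℂ) :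
    (∀ i, α i) → ℂ :=
  fun j => ∏ i, v i (j i)

/-- `T` has tensor rank at most `r`: it is a sum of `r` simple tensors. -/
def HasRankLE {ι : Type} [Fintype ι] {α : ι → Type} (T : (∀ i, α i) → ℂ) (r : ℕ) : Prop :=
  ∃ v : Fin r → ∀ i, α i → ℂ, T = ∑ p, prodTensor (v p)

/-- The tensor rank of `T`. -/
def tensorRank {ι : Type} [Fintype ι] {α : ι → Type} (T : (∀ i, α i) → ℂ) : ℕ :=
  sInf {r | HasRankLE T r}

/-- The border rank of `T`: the smallest `r` such that `T` is a limit of tensors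
of rank at most `r`. -/
def borderRank {ι : Type} [Fintype ι] {α : ι → Type} (T : (∀ i, α i) → ℂ) : ℕ :=
  sInf {r | T ∈ closure {S : (∀ i, α i) → ℂ | HasRankLE S r}}

/-- The slice of `T` in the `i`-th factor determined by the multi-index `m`
(the value of `m` at `i` is irrelevant). -/
def sliceAt {ι : Type} [DecidableEq ι] {α : ι → Type} (T : (∀ i, α i) → ℂ) (i : ι)
    (m : ∀ j, α j) : α i → ℂ :=
  fun k => T (Function.update m i k)

/-- `T ∈ V' ⊗ (⊗_{j ≠ i} V_j)` in the `i`-th factor: all `i`-th slices of `T`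
lie in the subspace `V'`. -/
def FactorIn {ι : Type} [DecidableEq ι] {α : ι → Type} (T : (∀ i, α i) → ℂ) (i : ι)
    (V' : Submodule ℂ (α i → ℂ)) : Prop :=
  ∀ m : ∀ j, α j, sliceAt T i m ∈ V'

/-- `T` is concise in the `i`-th factor: `T ∉ V' ⊗ (⊗_{j ≠ i} V_j)` for every
proper subspace `V' ⊊ V_i`. -/
def Concise {ι : Type} [DecidableEq ι] {α : ι → Type} (T : (∀ i, α i) → ℂ) (i : ι) : Prop :=
  ∀ V' : Submodule ℂ (α i → ℂ), FactorIn T i V' → V' = ⊤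

/-- Contraction `⟨f|T` of the first factor of `T` with a covector `f`. -/
def contractFirst {n : ℕ} {α : Fin (n + 1) → Type} (f : (α 0 → ℂ) →ₗ[ℂ] ℂ)
    (T : (∀ i, α i) → ℂ) : (∀ i : Fin n, α i.succ) → ℂ :=
  fun m => f (fun k => T (Fin.cons k m))

/-- Persistent tensors, defined inductively: a bipartite tensor is persistent
iff it is `1`-concise; an `n`-partite tensor (`n > 2`) is persistent iff it is
`1`-concise and there is a proper subspace `S ⊊ V₁^∨` such that `⟨f|T` is
persistent whenever `f ∉ S`. -/
def Persistent : {n : ℕ} → {α : Fin n → Type} → ((∀ i, α i) → ℂ) → Prop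
  | 0, _, _ => False
  | 1, _, _ => False
  | 2, _, T => Concise T 0
  | (n + 3), α, T =>
      Concise T 0 ∧
      ∃ S : Submodule ℂ ((α 0 → ℂ) →ₗ[ℂ] ℂ), S ≠ ⊤ ∧
        ∀ f : (α 0 → ℂ) →ₗ[ℂ] ℂ, f ∉ S → Persistent (contractFirst f T)

/-- Apply the linear maps with matrices `A i` to the factors of `T`
(the coordinate form of `(A 1 ⊗ ⋯ ⊗ A n) T`). -/
def applyLin {ι : Type} [Fintype ι] [DecidableEq ι] {α β : ι → Type} [∀ i, Fintype (α i)]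
    (A : ∀ i, β i → α i → ℂ) (T : (∀ i, α i) → ℂ) : (∀ i, β i) → ℂ :=
  fun j => ∑ m : ∀ i, α i, (∏ i, A i (j i) (m i)) * T m

/-- `T` can be transformed into `S` via SLOCC. -/
def SLOCCto {ι : Type} [Fintype ι] [DecidableEq ι] {α β : ι → Type} [∀ i, Fintype (α i)]
    (T : (∀ i, α i) → ℂ) (S : (∀ i, β i) → ℂ) : Prop :=
  ∃ A : ∀ i, β i → α i → ℂ, applyLin A T = S

/-- `T` degenerates into `S` via SLOCC: there are local maps `A i (ε)` with
entries polynomial in `ε` and an approximation degree `e` with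
`lim_{ε → 0} ε⁻ᵉ (A 1 (ε) ⊗ ⋯ ⊗ A n (ε)) T = S`. -/
def Degenerates {ι : Type} [Fintype ι] [DecidableEq ι] {α β : ι → Type} [∀ i, Fintype (α i)]
    (T : (∀ i, α i) → ℂ) (S : (∀ i, β i) → ℂ) : Prop :=
  ∃ (A : ∀ i, β i → α i → Polynomial ℂ) (e : ℕ),
    Filter.Tendsto
      (fun ε : ℂ => (ε ^ e)⁻¹ • applyLin (fun i r c => (A i r c).eval ε) T)
      (nhdsWithin 0 {0}ᶜ) (nhds S)

/-- The rank of the flattening of `T` across the bipartition `I | Iᶜ`. -/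
def flatRank {ι : Type} [Fintype ι] [DecidableEq ι] {α : ι → Type}
    [∀ i, Fintype (α i)] (T : (∀ i, α i) → ℂ) (I : Finset ι) : ℕ :=
  Matrix.rank (Matrix.of fun (a : ∀ i : {x // x ∈ I}, α i.1) (b : ∀ i : {x // x ∉ I}, α i.1) =>
    T fun i => if h : i ∈ I then a ⟨i, h⟩ else b ⟨i, h⟩)

/-- The direct sum `T ⊕ S` of two `n`-partite tensors, a tensor with `i`-th
local space `U_i ⊕ V_i`. -/
def directSum {ι : Type} [Fintype ι] {α β : ι → Type}
    (T : (∀ i, α i) → ℂ) (S : (∀ i, β i) → ℂ) : (∀ i, α i ⊕ β i) → ℂ :=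
  fun j =>
    if h : ∀ i, (j i).isLeft then T (fun i => (j i).getLeft (h i))
    else if h' : ∀ i, (j i).isRight then S (fun i => (j i).getRight (h' i))
    else 0

/-- The Kronecker product `T ⊠ S` of two `n`-partite tensors, an `n`-partite
tensor with `i`-th local space `U_i ⊗ V_i`. -/
def kron {ι : Type} {α β : ι → Type} (T : (∀ i, α i) → ℂ) (S : (∀ i, β i) → ℂ) :
    (∀ i, α i × β i) → ℂ :=
  fun j => T (fun i => (j i).1) * S (fun i => (j i).2)

/-- The outer (tensor) product `T ⊗ S` of an `n`-partite and an `m`-partite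
tensor, regarded as an `(n+m)`-partite tensor. -/
def outer {ι κ : Type} {α : ι → Type} {β : κ → Type}
    (T : (∀ i, α i) → ℂ) (S : (∀ k, β k) → ℂ) :
    (∀ x : ι ⊕ κ, Sum.elim α β x) → ℂ :=
  fun j => T (fun i => j (Sum.inl i)) * S (fun k => j (Sum.inr k))

/-- The `m`-fold Kronecker power `T^{⊠ m}` of an `n`-partite tensor with all
local spaces `ℂ^d`: an `n`-partite tensor with local spaces `(ℂ^d)^{⊗ m}`. -/
def kpow (d n : ℕ) (T : (Fin n → Fin d) → ℂ) (m : ℕ) :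
    (Fin n → (Fin m → Fin d)) → ℂ :=
  fun j => ∏ t : Fin m, T (fun i => j i t)

/-- The `n`-qubit W state `W_n = Σ_{i} |0⟩^{⊗(n-i-1)} ⊗ |1⟩ ⊗ |0⟩^{⊗ i}`:
its coefficient on a multi-index is `1` iff exactly one entry is `1`. -/
def Wstate (n : ℕ) : (Fin n → Fin 2) → ℂ :=
  fun m => if (∑ i, (m i : ℕ)) = 1 then 1 else 0

/-- The `n`-qudit GHZ state `G(d,n) = Σ_{j=0}^{d-1} |j⟩^{⊗ n}`. -/
def Gstate (d n : ℕ) : (Fin n → Fin d) → ℂ :=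
  fun m => if ∃ j : Fin d, ∀ i, m i = j then 1 else 0

/-- The `n`-qudit L state `L(d,n) = Σ_{j₁+⋯+jₙ = d-1} |j₁ ⋯ jₙ⟩`. -/
def Lstate (d n : ℕ) : (Fin n → Fin d) → ℂ :=
  fun m => if (∑ i, (m i : ℕ)) = d - 1 then 1 else 0

/-- The `n`-qudit M state
`M(d,n) = Σᵢ |0⟩^{⊗(n-i-1)} |d-1⟩ |0⟩^{⊗ i}
  + Σ_{i+k+l=n-2} Σ_{j=1}^{d-2} |0⟩^{⊗i} |j⟩ |0⟩^{⊗k} |d-j-1⟩ |0⟩^{⊗l}`: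
its coefficient on a multi-index is `1` iff the entries sum to `d-1` and at
most two entries are nonzero. -/
def Mstate (d n : ℕ) : (Fin n → Fin d) → ℂ :=
  fun m =>
    if (∑ i, (m i : ℕ)) = d - 1 ∧
        (Finset.univ.filter fun i => (m i : ℕ) ≠ 0).card ≤ 2 then 1 else 0

/-- The `n`-qudit N state
`N(d,n) = |0⟩^{⊗(n-1)} |d-1⟩ + Σ_{i=0}^{n-2} Σ_{j=1}^{d-1} |0⟩^{⊗(n-i-2)} |j⟩ |0⟩^{⊗i} |d-j-1⟩`:
its coefficient on a multi-index is `1` iff the entries sum to `d-1` and at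
most one of the first `n-1` entries is nonzero. -/
def Nstate (d n : ℕ) : (Fin n → Fin d) → ℂ :=
  fun m =>
    if (∑ i, (m i : ℕ)) = d - 1 ∧
        (Finset.univ.filter fun i : Fin n => (i : ℕ) + 1 < n ∧ (m i : ℕ) ≠ 0).card ≤ 1
    then 1 else 0

/-- Apply a linear endomorphism `π` of the `i`-th local space to the `i`-th
factor of `T`, i.e. `(id^{⊗(i-1)} ⊗ π ⊗ id^{⊗(n-i)}) T`. -/
def applyAtFactor {ι : Type} [DecidableEq ι] {α : ι → Type}
    (T : (∀ i, α i) → ℂ) (i : ι) (π : (α i → ℂ) →ₗ[ℂ] (α i → ℂ)) :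
    (∀ j, α j) → ℂ :=
  fun j => π (sliceAt T i j) (j i)

end


section NAuxQIT

variable (d : ℕ) [NeZero d]

private def naSig (j : Fin d) : Fin d := ⟨d - 1 - j.1, by have := j.2; omega⟩

private def naEst (n : ℕ) (u : Fin d → ℂ) : (Fin (n + 1) → Fin d) → ℂ :=
  fun m => if ∀ i, i ≠ Fin.last n → m i = 0 then u (m (Fin.last n)) else 0

private def naFst (n : ℕ) (u : Fin d → ℂ) : (Fin (n + 1) → Fin d) → ℂ :=
  fun m =>
    if ∀ i, i ≠ Fin.last n → m i = 0 then u (m (Fin.last n))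
    else if (∑ i, (m i : ℕ)) = d - 1 ∧
        ∀ i j : Fin (n + 1), (i ≠ Fin.last n ∧ m i ≠ 0) → (j ≠ Fin.last n ∧ m j ≠ 0) → i = j
      then 1 else 0

private def naGt (n : ℕ) (s : Finset (Fin d)) (u : Fin d → ℂ)
    (w : Fin d → Fin d → ℂ) : (Fin (n + 2) → Fin d) → ℂ :=
  fun m =>
    if m 0 ∈ s then
      (if m 0 = 0 then naFst d n u (Fin.tail m) else naEst d n (w (m 0)) (Fin.tail m))
    else 0

private lemma naSum_single {k : ℕ} (f : Fin k → ℕ) (a : Fin k)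
    (h : ∀ i, i ≠ a → f i = 0) : ∑ i, f i = f a :=
  Finset.sum_eq_single_of_mem a (Finset.mem_univ a) (fun i _ hi => h i hi)

private lemma naSum_pair {k : ℕ} (f : Fin k → ℕ) (a b : Fin k) (hab : a ≠ b)
    (h : ∀ i, i ≠ a → i ≠ b → f i = 0) : ∑ i, f i = f a + f b := by
  rw [← Finset.add_sum_erase _ f (Finset.mem_univ a)]
  congr 1
  rw [← Finset.add_sum_erase _ f (show b ∈ Finset.univ.erase a by
    simp [Finset.mem_erase, Ne.symm hab])]
  have hz : ∑ i ∈ (Finset.univ.erase a).erase b, f i = 0 := by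
    apply Finset.sum_eq_zero
    intro i hi
    simp only [Finset.mem_erase] at hi
    exact h i hi.2.1 hi.1
  rw [hz, add_zero]

private lemma naCard_le_one {k : ℕ} (p : Fin k → Prop) [DecidablePred p] :
    (Finset.univ.filter p).card ≤ 1 ↔ ∀ i j, p i → p j → i = j := by
  rw [Finset.card_le_one]
  constructor
  · intro h i j hi hj
    exact h i (by simp [hi]) j (by simp [hj])
  · intro h i hi j hj
    simp only [Finset.mem_filter, Finset.mem_univ, true_and] at hi hj
    exact h i j hi hj

private lemma naEst_lin (n : ℕ) (a : ℂ) (w1 w2 : Fin d → ℂ) (m : Fin (n + 1) → Fin d) :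
    naEst d n (fun t => w1 t - a * w2 t) m = naEst d n w1 m - a * naEst d n w2 m := by
  unfold naEst
  by_cases h : ∀ i, i ≠ Fin.last n → m i = 0
  · rw [if_pos h, if_pos h, if_pos h]
  · rw [if_neg h, if_neg h, if_neg h]; ring

private lemma naFst_lin (n : ℕ) (a : ℂ) (u w2 : Fin d → ℂ) (m : Fin (n + 1) → Fin d) :
    naFst d n (fun t => u t - a * w2 t) m = naFst d n u m - a * naEst d n w2 m := by
  unfold naFst naEst
  by_cases h : ∀ i, i ≠ Fin.last n → m i = 0
  · rw [if_pos h, if_pos h, if_pos h]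
  · rw [if_neg h, if_neg h, if_neg h]; ring

private lemma naNstate_eq (hd : 2 ≤ d) (N : ℕ) :
    Nstate d (N + 2) = naFst d (N + 1) (fun t => if (t : ℕ) = d - 1 then 1 else 0) := by
  have _inst : NeZero d := ‹_›
  funext m
  unfold Nstate naFst
  have hiff : ∀ i : Fin (N + 2), ((i : ℕ) + 1 < N + 2 ∧ (m i : ℕ) ≠ 0) ↔
      (i ≠ Fin.last (N + 1) ∧ m i ≠ 0) := by
    intro i
    have h1 : (i : ℕ) + 1 < N + 2 ↔ i ≠ Fin.last (N + 1) := by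
      constructor
      · intro h hc
        rw [hc, Fin.val_last] at h
        omega
      · intro h
        have h2 := i.2
        have h3 : (i : ℕ) ≠ N + 1 := fun hc => h (Fin.ext (by rw [hc, Fin.val_last]))
        omega
    have h2 : (m i : ℕ) ≠ 0 ↔ m i ≠ 0 := by
      constructor
      · intro h hc; exact h (by rw [hc, Fin.val_zero])
      · intro h hc; exact h (Fin.ext (by rw [hc, Fin.val_zero]))
    rw [h1, h2]
  by_cases hz : ∀ i : Fin (N + 2), i ≠ Fin.last (N + 1) → m i = 0
  · rw [if_pos hz]
    have hsum : ∑ i, (m i : ℕ) = (m (Fin.last (N + 1)) : ℕ) := by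
      apply naSum_single
      intro i hi
      rw [hz i hi, Fin.val_zero]
    have hcard : (Finset.univ.filter fun i : Fin (N + 2) =>
        (i : ℕ) + 1 < N + 2 ∧ (m i : ℕ) ≠ 0).card ≤ 1 := by
      rw [naCard_le_one]
      intro i j hi hj
      exact absurd (((hiff i).mp hi).2 (hz i ((hiff i).mp hi).1)) (fun _ => ((hiff i).mp hi).2 (hz i ((hiff i).mp hi).1))
    rw [if_congr (show (∑ i, (m i : ℕ)) = d - 1 ∧ _ ↔ (m (Fin.last (N+1)) : ℕ) = d - 1 from
      by rw [hsum]; exact ⟨fun h => h.1, fun h => ⟨h, hcard⟩⟩) rfl rfl]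
  · rw [if_neg hz]
    apply if_congr _ rfl rfl
    apply and_congr Iff.rfl
    rw [naCard_le_one]
    constructor
    · intro h i j hi hj
      exact h i j ((hiff i).mpr hi) ((hiff j).mpr hj)
    · intro h i j hi hj
      exact h i j ((hiff i).mp hi) ((hiff j).mp hj)

private lemma naFst_succ (n : ℕ) (u : Fin d → ℂ) :
    naFst d (n + 1) u = naGt d n Finset.univ u (fun j t => if t = naSig d j then 1 else 0) := by
  funext m
  have hlast : ∀ i : Fin (n + 1), i.succ = Fin.last (n + 1) ↔ i = Fin.last n := by
    intro i
    rw [← Fin.succ_last]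
    exact ⟨fun h => Fin.succ_injective _ h, fun h => by rw [h]⟩
  have h0last : (0 : Fin (n + 2)) ≠ Fin.last (n + 1) := by
    intro hc
    have := congrArg Fin.val hc
    rw [Fin.val_zero, Fin.val_last] at this
    omega
  have hsum : ∑ i : Fin (n + 2), (m i : ℕ) = (m 0 : ℕ) + ∑ i : Fin (n + 1), (Fin.tail m i : ℕ) :=
    Fin.sum_univ_succ _
  by_cases h0 : m 0 = 0
  · have hcond : (∀ i : Fin (n + 2), i ≠ Fin.last (n + 1) → m i = 0) ↔
        (∀ i : Fin (n + 1), i ≠ Fin.last n → Fin.tail m i = 0) := by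
      constructor
      · intro h i hi
        exact h i.succ (fun hc => hi ((hlast i).mp hc))
      · intro h i hi
        rcases eq_or_ne i 0 with rfl | hne
        · exact h0
        · obtain ⟨i', rfl⟩ := Fin.eq_succ_of_ne_zero hne
          exact h i' (fun hc => hi (by rw [hc, Fin.succ_last]))
    have hpair : (∀ i j : Fin (n + 2), (i ≠ Fin.last (n + 1) ∧ m i ≠ 0) →
          (j ≠ Fin.last (n + 1) ∧ m j ≠ 0) → i = j) ↔
        (∀ i j : Fin (n + 1), (i ≠ Fin.last n ∧ Fin.tail m i ≠ 0) →
          (j ≠ Fin.last n ∧ Fin.tail m j ≠ 0) → i = j) := by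
      constructor
      · intro h i j hi hj
        exact Fin.succ_injective _ (h i.succ j.succ
          ⟨fun hc => hi.1 ((hlast i).mp hc), hi.2⟩ ⟨fun hc => hj.1 ((hlast j).mp hc), hj.2⟩)
      · intro h i j hi hj
        obtain ⟨i', rfl⟩ := Fin.eq_succ_of_ne_zero (show i ≠ 0 from fun hc => hi.2 (hc ▸ h0))
        obtain ⟨j', rfl⟩ := Fin.eq_succ_of_ne_zero (show j ≠ 0 from fun hc => hj.2 (hc ▸ h0))
        rw [h i' j' ⟨fun hc => hi.1 (by rw [hc, Fin.succ_last]), hi.2⟩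
          ⟨fun hc => hj.1 (by rw [hc, Fin.succ_last]), hj.2⟩]
    have hm0 : (m 0 : ℕ) = 0 := by rw [h0, Fin.val_zero]
    have hsum' : (∑ i : Fin (n + 2), (m i : ℕ)) = ∑ i : Fin (n + 1), (Fin.tail m i : ℕ) := by
      rw [hsum, hm0, zero_add]
    unfold naGt
    rw [if_pos (Finset.mem_univ _), if_pos h0]
    unfold naFst
    exact if_congr hcond rfl (if_congr (and_congr (by rw [hsum']) hpair) rfl rfl)
  · unfold naGt naEst
    rw [if_pos (Finset.mem_univ _), if_neg h0]
    unfold naFst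
    rw [if_neg (show ¬ ∀ i : Fin (n + 2), i ≠ Fin.last (n + 1) → m i = 0 from
      fun h => h0 (h 0 h0last))]
    by_cases hmid : ∀ i : Fin (n + 1), i ≠ Fin.last n → Fin.tail m i = 0
    · rw [if_pos hmid]
      have hpair : ∀ i j : Fin (n + 2), (i ≠ Fin.last (n + 1) ∧ m i ≠ 0) →
          (j ≠ Fin.last (n + 1) ∧ m j ≠ 0) → i = j := by
        have key : ∀ i : Fin (n + 2), i ≠ Fin.last (n + 1) → m i ≠ 0 → i = 0 := by
          intro i hi hmi
          by_contra hne
          obtain ⟨i', rfl⟩ := Fin.eq_succ_of_ne_zero hne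
          exact hmi (hmid i' (fun hc => hi (by rw [hc, Fin.succ_last])))
        intro i j hi hj
        rw [key i hi.1 hi.2, key j hj.1 hj.2]
      have hsum2 : ∑ i : Fin (n + 2), (m i : ℕ) = (m 0 : ℕ) + (m (Fin.last (n + 1)) : ℕ) := by
        apply naSum_pair _ 0 (Fin.last (n + 1)) h0last
        intro i hi0 hil
        obtain ⟨i', rfl⟩ := Fin.eq_succ_of_ne_zero hi0
        have h5 : Fin.tail m i' = 0 := hmid i' (fun hc => hil (by rw [hc, Fin.succ_last]))
        show (Fin.tail m i' : ℕ) = 0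
        rw [h5, Fin.val_zero]
      have hval : ((∑ i : Fin (n + 2), (m i : ℕ)) = d - 1 ∧
            ∀ i j : Fin (n + 2), (i ≠ Fin.last (n + 1) ∧ m i ≠ 0) →
              (j ≠ Fin.last (n + 1) ∧ m j ≠ 0) → i = j) ↔
            Fin.tail m (Fin.last n) = naSig d (m 0) := by
          rw [hsum2]
          constructor
          · rintro ⟨hs, -⟩
            have h1 : (m 0 : ℕ) < d := (m 0).2
            show m (Fin.last n).succ = naSig d (m 0)
            apply Fin.ext
            rw [Fin.succ_last]
            show (m (Fin.last (n + 1)) : ℕ) = d - 1 - (m 0 : ℕ)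
            omega
          · intro hs
            refine ⟨?_, hpair⟩
            have h2 : (m (Fin.last (n + 1)) : ℕ) = d - 1 - (m 0 : ℕ) := by
              rw [← Fin.succ_last]
              exact congrArg Fin.val hs
            have h1 : (m 0 : ℕ) < d := (m 0).2
            have h3 : (m 0 : ℕ) ≠ 0 := fun hc => h0 (Fin.ext (by rw [hc, Fin.val_zero]))
            omega
      exact if_congr hval rfl rfl
    · rw [if_neg hmid, if_neg]
      rintro ⟨-, hp⟩
      push_neg at hmid
      obtain ⟨i1, hi1, hm1⟩ := hmid
      have h6 := hp 0 i1.succ ⟨h0last, h0⟩ ⟨fun hc => hi1 ((hlast i1).mp hc), hm1⟩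
      exact (Fin.succ_ne_zero i1) h6.symm

private lemma naGt_lb (hd : 2 ≤ d) (n : ℕ)
    (IH : ∀ u : Fin d → ℂ, u ⟨d - 1, by omega⟩ ≠ 0 →
      ∀ r, HasRankLE (naFst d n u) r → n * (d - 1) + 1 ≤ r) :
    ∀ (k : ℕ) (s : Finset (Fin d)), 0 ∈ s → s.card = k + 1 →
      ∀ (u : Fin d → ℂ) (w : Fin d → Fin d → ℂ),
        u ⟨d - 1, by omega⟩ ≠ 0 →
        (∀ j ∈ s.erase 0, w j ⟨d - 1, by omega⟩ = 0) →
        (∀ j ∈ s.erase 0, ∀ j' ∈ s.erase 0, w j' (naSig d j) = if j = j' then 1 else 0) →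
        ∀ r, HasRankLE (naGt d n s u w) r → k + (n * (d - 1) + 1) ≤ r := by
  intro k
  induction k with
  | zero =>
    intro s hs0 hcard u w hu hw0 hdel r hrank
    obtain ⟨v, hv⟩ := hrank
    obtain ⟨a, rfl⟩ := Finset.card_eq_one.mp hcard
    have ha : a = 0 := (Finset.mem_singleton.mp hs0).symm
    subst ha
    have key : HasRankLE (naFst d n u) r := by
      refine ⟨fun p => Fin.cons (fun t => v p 0 0 * v p 1 t) (fun i => v p i.succ.succ), ?_⟩
      funext m'
      have h1 : naFst d n u m' = naGt d n {0} u w (Fin.cons 0 m') := by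
        unfold naGt
        simp [Fin.cons_zero, Fin.tail_cons]
      rw [h1, hv, Finset.sum_apply, Finset.sum_apply]
      apply Finset.sum_congr rfl
      intro p _
      show prodTensor (v p) (Fin.cons 0 m') = prodTensor _ m'
      unfold prodTensor
      rw [Fin.prod_univ_succ, Fin.prod_univ_succ, Fin.prod_univ_succ]
      have hcons1 : (Fin.cons (0 : Fin d) m' : Fin (n + 2) → Fin d) 1 = m' 0 := by
        rw [← Fin.succ_zero_eq_one, Fin.cons_succ]
      simp only [Fin.cons_zero, Fin.cons_succ, Fin.succ_zero_eq_one, hcons1]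
      ring
    have := IH u hu r key
    omega
  | succ k ihk =>
    intro s hs0 hcard u w hu hw0 hdel r hrank
    obtain ⟨v, hv⟩ := hrank
    have hcard' : (s.erase 0).card = k + 1 := by
      rw [Finset.card_erase_of_mem hs0, hcard]
      omega
    obtain ⟨j0, hj0⟩ := Finset.card_pos.mp (show 0 < (s.erase 0).card by omega)
    obtain ⟨hj0ne, hj0s⟩ := Finset.mem_erase.mp hj0
    have hδj0 : w j0 (naSig d j0) = 1 := by
      have := hdel j0 hj0 j0 hj0
      rwa [if_pos rfl] at this
    have hex : ∃ p0, v p0 0 j0 ≠ 0 := by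
      by_contra hall
      push_neg at hall
      set mstar : Fin (n + 2) → Fin d :=
        Fin.cons j0 (fun i => if i = Fin.last n then naSig d j0 else 0) with hm
      have hm0 : mstar 0 = j0 := rfl
      have h1 : naGt d n s u w mstar = 1 := by
        unfold naGt naEst
        rw [hm0, if_pos hj0s, if_neg hj0ne]
        rw [show Fin.tail mstar = (fun i : Fin (n + 1) => if i = Fin.last n then naSig d j0 else 0)
          from rfl]
        rw [if_pos (fun i hi => if_neg hi)]
        show w j0 (if Fin.last n = Fin.last n then naSig d j0 else 0) = 1
        rw [if_pos rfl]
        exact hδj0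
      have h2 : naGt d n s u w mstar = 0 := by
        rw [hv, Finset.sum_apply]
        apply Finset.sum_eq_zero
        intro p _
        unfold prodTensor
        apply Finset.prod_eq_zero (Finset.mem_univ (0 : Fin (n + 2)))
        rw [hm0]
        exact hall p
      exact one_ne_zero (h1.symm.trans h2)
    obtain ⟨p0, hp0⟩ := hex
    obtain ⟨r', rfl⟩ : ∃ r', r = r' + 1 := ⟨r - 1, by have := p0.pos; omega⟩
    set c : Fin d → ℂ := fun j => v p0 0 j / v p0 0 j0 with hc
    set s' := s.erase j0 with hs'
    set u' : Fin d → ℂ := fun t => u t - c 0 * w j0 t with hu'def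
    set w' : Fin d → Fin d → ℂ := fun j t => w j t - c j * w j0 t with hw'def
    set vt : Fin (r' + 1) → ∀ i : Fin (n + 2), Fin d → ℂ :=
      fun p => Fin.cons (fun t => if t ∈ s' then v p 0 t - v p 0 j0 * c t else 0)
        (fun i => v p i.succ) with hvt
    have tailprod : ∀ (p) (m : Fin (n + 2) → Fin d), prodTensor (v p) m
        = v p 0 (m 0) * ∏ i : Fin (n + 1), v p i.succ (m i.succ) := by
      intro p m
      exact Fin.prod_univ_succ _
    have hGt : ∀ m : Fin (n + 2) → Fin d, naGt d n s u w m
        = ∑ p, v p 0 (m 0) * ∏ i : Fin (n + 1), v p i.succ (m i.succ) := by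
      intro m
      rw [hv, Finset.sum_apply]
      exact Finset.sum_congr rfl fun p _ => tailprod p m
    have htail : ∀ m : Fin (n + 2) → Fin d,
        Fin.tail (Function.update m 0 j0) = Fin.tail m := by
      intro m
      funext i
      exact Function.update_of_ne (Fin.succ_ne_zero i) _ _
    have hsum : naGt d n s' u' w' = ∑ p, prodTensor (vt p) := by
      funext m
      rw [Finset.sum_apply]
      have hvtp : ∀ p, prodTensor (vt p) m =
          (if m 0 ∈ s' then v p 0 (m 0) - v p 0 j0 * c (m 0) else 0)
            * ∏ i : Fin (n + 1), v p i.succ (m i.succ) := by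
        intro p
        unfold prodTensor
        rw [Fin.prod_univ_succ]
        simp only [hvt, Fin.cons_zero, Fin.cons_succ]
      rw [Finset.sum_congr rfl fun p _ => hvtp p]
      by_cases hm : m 0 ∈ s'
      · simp only [if_pos hm]
        have exp : ∑ p, (v p 0 (m 0) - v p 0 j0 * c (m 0))
              * ∏ i : Fin (n + 1), v p i.succ (m i.succ)
            = (∑ p, v p 0 (m 0) * ∏ i : Fin (n + 1), v p i.succ (m i.succ))
              - c (m 0) * ∑ p, v p 0 j0 * ∏ i : Fin (n + 1), v p i.succ (m i.succ) := by
          rw [Finset.mul_sum, ← Finset.sum_sub_distrib]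
          apply Finset.sum_congr rfl
          intro p _
          ring
        have hupd : ∑ p, v p 0 j0 * ∏ i : Fin (n + 1), v p i.succ (m i.succ)
            = naGt d n s u w (Function.update m 0 j0) := by
          rw [hGt]
          apply Finset.sum_congr rfl
          intro p _
          have hup1 : Function.update m 0 j0 0 = j0 := Function.update_self _ _ _
          have hup2 : ∀ i : Fin (n + 1), Function.update m 0 j0 i.succ = m i.succ :=
            fun i => Function.update_of_ne (Fin.succ_ne_zero i) _ _
          simp only [hup1, hup2]
        rw [exp, ← hGt m, hupd]
        have hms : m 0 ∈ s := Finset.mem_of_mem_erase (hs' ▸ hm)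
        have hGtupd : naGt d n s u w (Function.update m 0 j0)
            = naEst d n (w j0) (Fin.tail m) := by
          unfold naGt
          rw [Function.update_self, if_pos hj0s, if_neg hj0ne, htail]
        by_cases hm0 : m 0 = 0
        · have e1 : naGt d n s u w m = naFst d n u (Fin.tail m) := by
            unfold naGt
            rw [if_pos hms, if_pos hm0]
          have e2 : naGt d n s' u' w' m = naFst d n u' (Fin.tail m) := by
            unfold naGt
            rw [if_pos hm, if_pos hm0]
          rw [e1, e2, hGtupd, hm0, hu'def]
          exact naFst_lin d n (c 0) u (w j0) (Fin.tail m)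
        · have e1 : naGt d n s u w m = naEst d n (w (m 0)) (Fin.tail m) := by
            unfold naGt
            rw [if_pos hms, if_neg hm0]
          have e2 : naGt d n s' u' w' m = naEst d n (w' (m 0)) (Fin.tail m) := by
            unfold naGt
            rw [if_pos hm, if_neg hm0]
          rw [e1, e2, hGtupd, hw'def]
          exact naEst_lin d n (c (m 0)) (w (m 0)) (w j0) (Fin.tail m)
      · simp only [if_neg hm, zero_mul, Finset.sum_const_zero]
        unfold naGt
        rw [if_neg hm]
    have hzero : prodTensor (vt p0) = 0 := by
      funext m
      rw [Pi.zero_apply]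
      unfold prodTensor
      apply Finset.prod_eq_zero (Finset.mem_univ (0 : Fin (n + 2)))
      simp only [hvt, Fin.cons_zero]
      by_cases hms : m 0 ∈ s'
      · rw [if_pos hms, hc]
        rw [mul_comm, div_mul_cancel₀ _ hp0, sub_self]
      · rw [if_neg hms]
    have hrank' : HasRankLE (naGt d n s' u' w') r' := by
      refine ⟨fun q => vt (p0.succAbove q), ?_⟩
      rw [hsum, Fin.sum_univ_succAbove _ p0, hzero, zero_add]
    have h0s' : (0 : Fin d) ∈ s' := Finset.mem_erase.mpr ⟨Ne.symm hj0ne, hs0⟩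
    have hcard'' : s'.card = k + 1 := by
      rw [hs', Finset.card_erase_of_mem hj0s, hcard]
      omega
    have hsub : ∀ j, j ∈ s'.erase 0 → j ∈ s.erase 0 := by
      intro j hj
      obtain ⟨hj1, hj2⟩ := Finset.mem_erase.mp hj
      exact Finset.mem_erase.mpr ⟨hj1, Finset.mem_of_mem_erase hj2⟩
    have hne' : ∀ j ∈ s'.erase 0, j ≠ j0 := by
      intro j hj
      exact (Finset.mem_erase.mp (Finset.mem_erase.mp hj).2).1
    have hu'ne : u' ⟨d - 1, by omega⟩ ≠ 0 := by
      rw [hu'def]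
      show u _ - c 0 * w j0 _ ≠ 0
      rw [hw0 j0 hj0, mul_zero, sub_zero]
      exact hu
    have hw0' : ∀ j ∈ s'.erase 0, w' j ⟨d - 1, by omega⟩ = 0 := by
      intro j hj
      rw [hw'def]
      show w j _ - c j * w j0 _ = 0
      rw [hw0 j (hsub j hj), hw0 j0 hj0, mul_zero, sub_zero]
    have hdel' : ∀ j ∈ s'.erase 0, ∀ j' ∈ s'.erase 0,
        w' j' (naSig d j) = if j = j' then 1 else 0 := by
      intro j hj j' hj'
      rw [hw'def]
      show w j' _ - c j' * w j0 _ = _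
      rw [hdel j (hsub j hj) j' (hsub j' hj'), hdel j (hsub j hj) j0 hj0,
        if_neg (hne' j hj), mul_zero, sub_zero]
    have := ihk s' h0s' hcard'' u' w' hu'ne hw0' hdel' r' hrank'
    omega

private lemma naFst_lb (hd : 2 ≤ d) :
    ∀ (n : ℕ) (u : Fin d → ℂ), u ⟨d - 1, by omega⟩ ≠ 0 →
      ∀ r, HasRankLE (naFst d n u) r → n * (d - 1) + 1 ≤ r := by
  intro n
  induction n with
  | zero =>
    intro u hu r hr
    rcases Nat.eq_zero_or_pos r with rfl | h
    · exfalso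
      obtain ⟨v, hv⟩ := hr
      have h2 := congrFun hv (fun _ => (⟨d - 1, by omega⟩ : Fin d))
      rw [Finset.sum_apply] at h2
      simp only [Finset.univ_eq_empty, Finset.sum_empty] at h2
      unfold naFst at h2
      have hcond : ∀ i : Fin (0 + 1), i ≠ Fin.last 0 →
          (fun _ : Fin (0 + 1) => (⟨d - 1, by omega⟩ : Fin d)) i = 0 := by
        intro i hi
        exfalso
        apply hi
        apply Fin.ext
        have h3 := i.2
        have hl : (Fin.last 0).val = 0 := rfl
        omega
      rw [if_pos hcond] at h2
      exact hu h2
    · omega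
  | succ n ih =>
    intro u hu r hr
    rw [naFst_succ d n u] at hr
    have hw0 : ∀ j ∈ (Finset.univ : Finset (Fin d)).erase 0,
        (fun t => if t = naSig d j then (1 : ℂ) else 0) ⟨d - 1, by omega⟩ = 0 := by
      intro j hj
      have hjne : j ≠ 0 := (Finset.mem_erase.mp hj).1
      have hj1 : 1 ≤ (j : ℕ) := by
        rcases Nat.eq_zero_or_pos (j : ℕ) with hz | hp
        · exact absurd (Fin.ext (by rw [hz, Fin.val_zero])) hjne
        · exact hp
      show (if (⟨d - 1, by omega⟩ : Fin d) = naSig d j then (1 : ℂ) else 0) = 0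
      rw [if_neg]
      intro hcon
      have h4 := congrArg Fin.val hcon
      have h5 := j.2
      show False
      unfold naSig at h4
      simp only at h4
      omega
    have hdel : ∀ j ∈ (Finset.univ : Finset (Fin d)).erase 0,
        ∀ j' ∈ (Finset.univ : Finset (Fin d)).erase 0,
        (fun t => if t = naSig d j' then (1 : ℂ) else 0) (naSig d j)
          = if j = j' then 1 else 0 := by
      intro j hj j' hj'
      show (if naSig d j = naSig d j' then (1 : ℂ) else 0) = if j = j' then 1 else 0
      apply if_congr _ rfl rfl
      constructor
      · intro h
        have h4 := congrArg Fin.val h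
        unfold naSig at h4
        simp only at h4
        have h5 := j.2
        have h6 := j'.2
        exact Fin.ext (by omega)
      · intro h
        rw [h]
    have hbound := naGt_lb d hd n ih (d - 1) Finset.univ (Finset.mem_univ 0)
      (by rw [Finset.card_univ, Fintype.card_fin]; omega) u _ hu hw0 hdel r hr
    have hmul : (n + 1) * (d - 1) = n * (d - 1) + (d - 1) := by ring
    omega

private def naPhi (N : ℕ) : (Fin (N + 1) × Fin (d - 1)) ⊕ Unit → Fin (N + 2) → Fin d
  | Sum.inl x => fun k =>
      if k = x.1.castSucc then ⟨(x.2 : ℕ) + 1, by have := x.2.2; omega⟩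
      else if k = Fin.last (N + 1) then ⟨d - 1 - ((x.2 : ℕ) + 1), by have := x.2.2; omega⟩
      else 0
  | Sum.inr _ => fun k =>
      if k = Fin.last (N + 1) then ⟨d - 1, by have := Nat.pos_of_ne_zero (NeZero.ne d); omega⟩
      else 0

private lemma naPhi_cond (hd : 2 ≤ d) (N : ℕ) (x : (Fin (N + 1) × Fin (d - 1)) ⊕ Unit) :
    (∑ i, ((naPhi d N x i : ℕ))) = d - 1 ∧
      (Finset.univ.filter fun i : Fin (N + 2) =>
        (i : ℕ) + 1 < N + 2 ∧ (naPhi d N x i : ℕ) ≠ 0).card ≤ 1 := by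
  cases x with
  | inr a =>
    constructor
    · rw [naSum_single _ (Fin.last (N + 1))]
      · simp [naPhi]
      · intro i hi
        simp [naPhi, hi]
    · rw [naCard_le_one]
      rintro i j ⟨hi1, hi2⟩ ⟨hj1, hj2⟩
      exfalso
      have hli : i ≠ Fin.last (N + 1) := by
        intro hc
        rw [hc, Fin.val_last] at hi1
        omega
      exact hi2 (by simp [naPhi, hli])
  | inl y =>
    obtain ⟨i0, j⟩ := y
    have hne : i0.castSucc ≠ Fin.last (N + 1) := (Fin.castSucc_lt_last i0).ne
    constructor
    · rw [naSum_pair _ i0.castSucc (Fin.last (N + 1)) hne]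
      · have h1 : (naPhi d N (Sum.inl (i0, j)) i0.castSucc : ℕ) = (j : ℕ) + 1 := by
          simp [naPhi]
        have h2 : (naPhi d N (Sum.inl (i0, j)) (Fin.last (N + 1)) : ℕ)
            = d - 1 - ((j : ℕ) + 1) := by
          simp [naPhi, Ne.symm hne]
        rw [h1, h2]
        have := j.2
        omega
      · intro i hi1 hi2
        simp [naPhi, hi1, hi2]
    · rw [naCard_le_one]
      have key : ∀ i : Fin (N + 2), (i : ℕ) + 1 < N + 2 →
          (naPhi d N (Sum.inl (i0, j)) i : ℕ) ≠ 0 → i = i0.castSucc := by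
        intro i h1 h2
        by_contra hne2
        have hli : i ≠ Fin.last (N + 1) := by
          intro hc
          rw [hc, Fin.val_last] at h1
          omega
        exact h2 (by simp [naPhi, hne2, hli])
      rintro i j' ⟨hi1, hi2⟩ ⟨hj1, hj2⟩
      rw [key i hi1 hi2, key j' hj1 hj2]

private lemma naPhi_inj (hd : 2 ≤ d) (N : ℕ) {x x' : (Fin (N + 1) × Fin (d - 1)) ⊕ Unit}
    (h : naPhi d N x = naPhi d N x') : x = x' := by
  cases x with
  | inr a =>
    cases x' with
    | inr a' => rfl
    | inl y' =>
      exfalso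
      obtain ⟨i', j'⟩ := y'
      have hv := congrArg Fin.val (congrFun h i'.castSucc)
      simp [naPhi, (Fin.castSucc_lt_last i').ne] at hv
  | inl y =>
    obtain ⟨i0, j⟩ := y
    cases x' with
    | inr a' =>
      exfalso
      have hv := congrArg Fin.val (congrFun h i0.castSucc)
      simp [naPhi, (Fin.castSucc_lt_last i0).ne] at hv
    | inl y' =>
      obtain ⟨i', j'⟩ := y'
      by_cases hii : i0 = i'
      · subst hii
        have hv := congrArg Fin.val (congrFun h i0.castSucc)
        simp [naPhi] at hv
        rw [show j = j' from Fin.ext hv]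
      · exfalso
        have h2 : i0.castSucc ≠ i'.castSucc := fun hc => hii (Fin.castSucc_injective _ hc)
        have hv := congrArg Fin.val (congrFun h i0.castSucc)
        simp [naPhi, h2, (Fin.castSucc_lt_last i0).ne] at hv

private lemma naPhi_surj (hd : 2 ≤ d) (N : ℕ) (m : Fin (N + 2) → Fin d)
    (hsum : (∑ i, ((m i : ℕ))) = d - 1)
    (hcard : (Finset.univ.filter fun i : Fin (N + 2) =>
      (i : ℕ) + 1 < N + 2 ∧ (m i : ℕ) ≠ 0).card ≤ 1) :
    ∃ x, naPhi d N x = m := by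
  rw [naCard_le_one] at hcard
  by_cases hex : ∃ i1 : Fin (N + 2), (i1 : ℕ) + 1 < N + 2 ∧ (m i1 : ℕ) ≠ 0
  · obtain ⟨i1, hi1, hm1⟩ := hex
    have hi1last : i1 ≠ Fin.last (N + 1) := by
      intro hc
      rw [hc, Fin.val_last] at hi1
      omega
    have hzero : ∀ i, i ≠ i1 → i ≠ Fin.last (N + 1) → (m i : ℕ) = 0 := by
      intro i hnei hnl
      by_contra hmi
      have hival : (i : ℕ) + 1 < N + 2 := by
        have h2 := i.2
        have h3 : (i : ℕ) ≠ N + 1 := fun hc => hnl (Fin.ext (by rw [hc, Fin.val_last]))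
        omega
      exact hnei (hcard i i1 ⟨hival, hmi⟩ ⟨hi1, hm1⟩)
    have hsum2 : (m i1 : ℕ) + (m (Fin.last (N + 1)) : ℕ) = d - 1 := by
      rw [naSum_pair _ i1 (Fin.last (N + 1)) hi1last hzero] at hsum
      exact hsum
    have hmi1pos : 1 ≤ (m i1 : ℕ) := Nat.pos_of_ne_zero hm1
    have hmi1lt : (m i1 : ℕ) < d := (m i1).2
    set i0 : Fin (N + 1) := ⟨(i1 : ℕ), by omega⟩ with hi0
    have hcast : i0.castSucc = i1 := Fin.ext rfl
    refine ⟨Sum.inl (i0, ⟨(m i1 : ℕ) - 1, by omega⟩), ?_⟩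
    funext k
    by_cases hk1 : k = i1
    · rw [hk1]
      apply Fin.ext
      simp only [naPhi]
      rw [if_pos hcast.symm]
      show (m i1 : ℕ) - 1 + 1 = (m i1 : ℕ)
      omega
    · by_cases hk2 : k = Fin.last (N + 1)
      · rw [hk2]
        apply Fin.ext
        simp only [naPhi]
        rw [if_neg (by rw [hcast]; exact Ne.symm hi1last), if_pos trivial]
        show d - 1 - ((m i1 : ℕ) - 1 + 1) = (m (Fin.last (N + 1)) : ℕ)
        omega
      · apply Fin.ext
        simp only [naPhi]
        rw [if_neg (by rw [hcast]; exact hk1), if_neg hk2, Fin.val_zero]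
        exact (hzero k hk1 hk2).symm
  · push_neg at hex
    refine ⟨Sum.inr (), ?_⟩
    funext k
    have hz : ∀ i : Fin (N + 2), i ≠ Fin.last (N + 1) → (m i : ℕ) = 0 := by
      intro i hi
      have hival : (i : ℕ) + 1 < N + 2 := by
        have h2 := i.2
        have h3 : (i : ℕ) ≠ N + 1 := fun hc => hi (Fin.ext (by rw [hc, Fin.val_last]))
        omega
      exact hex i hival
    by_cases hk : k = Fin.last (N + 1)
    · rw [hk]
      apply Fin.ext
      simp only [naPhi]
      rw [if_pos trivial]
      have h6 : ∑ i, (m i : ℕ) = (m (Fin.last (N + 1)) : ℕ) :=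
        naSum_single (fun i => (m i : ℕ)) (Fin.last (N + 1)) hz
      show d - 1 = (m (Fin.last (N + 1)) : ℕ)
      omega
    · apply Fin.ext
      simp only [naPhi]
      rw [if_neg hk, Fin.val_zero]
      exact (hz k hk).symm

private lemma naNstate_upper (hd : 2 ≤ d) (N : ℕ) :
    HasRankLE (Nstate d (N + 2)) ((N + 1) * (d - 1) + 1) := by
  classical
  have hcard : Fintype.card ((Fin (N + 1) × Fin (d - 1)) ⊕ Unit) = (N + 1) * (d - 1) + 1 := by
    simp
  rw [← hcard]
  set V : ((Fin (N + 1) × Fin (d - 1)) ⊕ Unit) → ∀ i : Fin (N + 2), Fin d → ℂ :=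
    fun x i t => if t = naPhi d N x i then 1 else 0 with hV
  set e := (Fintype.equivFin ((Fin (N + 1) × Fin (d - 1)) ⊕ Unit)).symm with he
  refine ⟨fun p => V (e p), ?_⟩
  have hVx : ∀ x m, prodTensor (V x) m = if m = naPhi d N x then 1 else 0 := by
    intro x m
    unfold prodTensor
    by_cases hmx : m = naPhi d N x
    · rw [if_pos hmx]
      apply Finset.prod_eq_one
      intro i _
      show (if m i = naPhi d N x i then (1 : ℂ) else 0) = 1
      rw [if_pos (congrFun hmx i)]
    · rw [if_neg hmx]
      obtain ⟨i, hi⟩ : ∃ i, m i ≠ naPhi d N x i := by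
        by_contra hall
        push_neg at hall
        exact hmx (funext hall)
      apply Finset.prod_eq_zero (Finset.mem_univ i)
      show (if m i = naPhi d N x i then (1 : ℂ) else 0) = 0
      rw [if_neg hi]
  have key : Nstate d (N + 2) = ∑ x, prodTensor (V x) := by
    funext m
    rw [Finset.sum_apply, Finset.sum_congr rfl fun x _ => hVx x m]
    unfold Nstate
    by_cases hcond : (∑ i, ((m i : ℕ))) = d - 1 ∧
        (Finset.univ.filter fun i : Fin (N + 2) =>
          (i : ℕ) + 1 < N + 2 ∧ (m i : ℕ) ≠ 0).card ≤ 1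
    · obtain ⟨x0, hx0⟩ := naPhi_surj d hd N m hcond.1 hcond.2
      have huniq : ∀ x, (m = naPhi d N x) ↔ (x = x0) := by
        intro x
        constructor
        · intro h
          exact naPhi_inj d hd N (by rw [hx0, ← h])
        · intro h
          rw [h, hx0]
      rw [Finset.sum_congr rfl fun x _ => if_congr (huniq x) rfl rfl]
      rw [Finset.sum_ite_eq' Finset.univ x0 (fun _ => (1 : ℂ))]
      rw [if_pos hcond, if_pos (Finset.mem_univ x0)]
    · have hno : ∀ x, (if m = naPhi d N x then (1 : ℂ) else 0) = 0 := by
        intro x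
        rw [if_neg]
        intro h
        rw [h] at hcond
        exact hcond (naPhi_cond d hd N x)
      rw [Finset.sum_congr rfl fun x _ => hno x, Finset.sum_const_zero, if_neg hcond]
  rw [key]
  exact (Fintype.sum_equiv e (fun p => prodTensor (V (e p))) (fun x => prodTensor (V x))
    (fun p => rfl)).symm

end NAuxQIT

/-- the tensor rank of the `n`-qudit N state is `(n−1)(d−1)+1`. -/
theorem N_tensorRank (d n : ℕ) (hd : 2 ≤ d) (hn : 2 ≤ n) :
    tensorRank (Nstate d n) = (n - 1) * (d - 1) + 1 := by
  haveI : NeZero d := ⟨by omega⟩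
  obtain ⟨N, rfl⟩ : ∃ N, n = N + 2 := ⟨n - 2, by omega⟩
  have hub : HasRankLE (Nstate d (N + 2)) ((N + 1) * (d - 1) + 1) := naNstate_upper d hd N
  have hlb : ∀ r, HasRankLE (Nstate d (N + 2)) r → (N + 1) * (d - 1) + 1 ≤ r := by
    intro r hr
    rw [naNstate_eq d hd N] at hr
    refine naFst_lb d hd (N + 1) _ ?_ r hr
    show (if ((⟨d - 1, by omega⟩ : Fin d) : ℕ) = d - 1 then (1 : ℂ) else 0) ≠ 0
    rw [if_pos rfl]
    exact one_ne_zero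
  have hval : N + 2 - 1 = N + 1 := rfl
  rw [hval]
  unfold tensorRank
  exact le_antisymm (Nat.sInf_le hub) (hlb _ (Nat.sInf_mem (s := {r | HasRankLE (Nstate d (N + 2)) r}) ⟨_, hub⟩))

end QIT
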